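/- Let the camera be at the origin, the obstacle a unit ball centered at r_co with ‖r_co‖ > 1, and the target at r_ct. If the target lies strictly outside the occlusion cone of the obstacle (the set of points p with ⟨p, r_co⟩/‖p‖ ≥ √(‖r_co‖² − 1)·‖r_co‖/‖r_co‖, i.e., within angular radius arcsin(1/‖r_co‖) of the direction r_co and beyond the tangent point), then the open segment from the origin to r_ct does not intersect the open unit ball centered at r_co. -/

import Mathlib

/-- Camera at origin, unit-ball obstacle centered at `r_co` with
`‖r_co‖ > 1`, target at `r_ct`. If the target lies strictly outside the occlusion cone
(i.e. `⟨r_ct, r_co⟩/‖r_ct‖ < √(‖r_co‖² − 1)`), then the open segment from the origin to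
`r_ct` does not intersect the open unit ball centered at `r_co`. -/
theorem outside_occlusion_cone_no_occlusion
    (rco rct : EuclideanSpace ℝ (Fin 3)) (hco : 1 < ‖rco‖) (hct : rct ≠ 0)
    (hcone : (inner ℝ rct rco : ℝ) / ‖rct‖ < Real.sqrt (‖rco‖ ^ 2 - 1)) :
    ∀ s ∈ Set.Ioo (0:ℝ) 1, ¬ ‖s • rct - rco‖ < 1 := by
  intro s hs hlt
  have hrct : 0 < ‖rct‖ := norm_pos_iff.mpr hct
  set b := Real.sqrt (‖rco‖ ^ 2 - 1) with hb
  have hb2 : b ^ 2 = ‖rco‖ ^ 2 - 1 := Real.sq_sqrt (by nlinarith)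
  have hbnn : 0 ≤ b := Real.sqrt_nonneg _
  have hinner : (inner ℝ rct rco : ℝ) < ‖rct‖ * b := by
    rw [div_lt_iff₀ hrct] at hcone; linarith
  have hsq : ‖s • rct - rco‖ ^ 2 =
      s ^ 2 * ‖rct‖ ^ 2 - 2 * s * (inner ℝ rct rco : ℝ) + ‖rco‖ ^ 2 := by
    rw [norm_sub_sq_real, norm_smul, real_inner_smul_left, Real.norm_eq_abs,
      abs_of_pos hs.1]
    ring
  have h1 : ‖s • rct - rco‖ ^ 2 < 1 := by
    nlinarith [norm_nonneg (s • rct - rco)]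
  nlinarith [sq_nonneg (s * ‖rct‖ - b), hs.1, mul_pos hs.1 hrct]
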